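/- If G is a connected simple graph and Q_{-1} = ((-1)^{∂(x,y)})_{x,y∈V} is positive semidefinite, then G contains no triple of vertices (x₁, x₂, x₃) with ∂(x₁,x₂) = ∂(x₁,x₃) and x₂ adjacent to x₃. -/

import Mathlib

open scoped ComplexOrder

/-- `Q`-matrix positive semidefiniteness: the kernel `(x, y) ↦ q ^ ∂(x,y)` is a
positive definite kernel on the vertex set (with `0 ^ 0 = 1`). -/
def QPSD {V : Type*} (G : SimpleGraph V) (q : ℝ) : Prop :=
  ∀ f : V →₀ ℂ,
    0 ≤ ∑ x ∈ f.support, ∑ y ∈ f.support,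
      (starRingEnd ℂ) (f x) * f y * (q : ℂ) ^ G.dist x y

theorem stmt4 {V : Type*} (G : SimpleGraph V) (hconn : G.Connected)
    (hpsd : QPSD G (-1)) :
    ¬ ∃ x₁ x₂ x₃ : V, G.dist x₁ x₂ = G.dist x₁ x₃ ∧ G.Adj x₂ x₃ := by
  classical
  rintro ⟨x₁, x₂, x₃, hd, hadj⟩
  have h23 : x₂ ≠ x₃ := hadj.ne
  have hd23 : G.dist x₂ x₃ = 1 := (SimpleGraph.dist_eq_one_iff_adj).2 hadj
  have h12 : x₁ ≠ x₂ := by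
    rintro rfl
    simp [SimpleGraph.dist_self, hd23] at hd
  have h13 : x₁ ≠ x₃ := by
    rintro rfl
    rw [SimpleGraph.dist_comm, hd23, SimpleGraph.dist_self] at hd
    exact one_ne_zero hd
  set d := G.dist x₁ x₂ with hdd
  have hd13 : G.dist x₁ x₃ = d := hd.symm
  have hd21 : G.dist x₂ x₁ = d := by rw [SimpleGraph.dist_comm]
  have hd31 : G.dist x₃ x₁ = d := by rw [SimpleGraph.dist_comm]; exact hd13
  have hd32 : G.dist x₃ x₂ = 1 := by rw [SimpleGraph.dist_comm]; exact hd23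
  set ε : ℂ := (-1 : ℂ) ^ d with hε
  have hε2 : ε * ε = 1 := by
    rw [hε, ← pow_add, ← two_mul, pow_mul]; norm_num
  have hεc : (starRingEnd ℂ) ε = ε := by
    rw [hε, map_pow]; norm_num
  set a : ℂ := -2 * ε with ha
  have hane : a ≠ 0 := by
    rw [ha, hε]
    simp [pow_ne_zero]
  set f : V →₀ ℂ := Finsupp.single x₁ a + (Finsupp.single x₂ 1 + Finsupp.single x₃ 1) with hf
  have hfv : ∀ v, f v = (if v = x₁ then a else 0) + ((if v = x₂ then 1 else 0) + (if v = x₃ then 1 else 0)) := by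
    intro v
    simp [hf, Finsupp.single_apply, eq_comm]
  have hf1 : f x₁ = a := by rw [hfv]; simp [h12, h13]
  have hf2 : f x₂ = 1 := by rw [hfv]; simp [h12.symm, h23]
  have hf3 : f x₃ = 1 := by rw [hfv]; simp [h13.symm, h23.symm]
  have hsupp : f.support = {x₁, x₂, x₃} := by
    ext v
    by_cases hv1 : v = x₁ <;> by_cases hv2 : v = x₂ <;> by_cases hv3 : v = x₃ <;>
      simp_all [Finsupp.mem_support_iff, hfv]
  have := hpsd f
  rw [hsupp] at this
  simp only [Complex.ofReal_neg, Complex.ofReal_one] at this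
  have hm1 : x₁ ∉ ({x₂, x₃} : Finset V) := by
    simp only [Finset.mem_insert, Finset.mem_singleton]
    push_neg
    exact ⟨h12, h13⟩
  have hm2 : x₂ ∉ ({x₃} : Finset V) := by simpa using h23
  simp only [Finset.sum_insert hm1, Finset.sum_insert hm2, Finset.sum_singleton] at this
  rw [hf1, hf2, hf3] at this
  simp only [SimpleGraph.dist_self, hd13, hd21, hd31, hd23, hd32, ← hdd, ← hε] at this
  rw [ha] at this
  have hval : (starRingEnd ℂ) (-2 * ε) * (-2 * ε) * (-1 : ℂ) ^ (0:ℕ) +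
      ((starRingEnd ℂ) (-2 * ε) * 1 * ε + (starRingEnd ℂ) (-2 * ε) * 1 * ε) +
      (((starRingEnd ℂ) 1 * (-2 * ε) * ε + ((starRingEnd ℂ) 1 * 1 * (-1 : ℂ) ^ (0:ℕ) +
        (starRingEnd ℂ) 1 * 1 * (-1 : ℂ) ^ (1:ℕ))) +
      ((starRingEnd ℂ) 1 * (-2 * ε) * ε + ((starRingEnd ℂ) 1 * 1 * (-1 : ℂ) ^ (1:ℕ) +
        (starRingEnd ℂ) 1 * 1 * (-1 : ℂ) ^ (0:ℕ)))) = -4 := by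
    simp only [map_mul, map_neg, map_ofNat, map_one, hεc]
    ring_nf
    rw [sq, hε2]
    norm_num
  rw [hval] at this
  norm_num [Complex.le_def] at this
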